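/- In the basilica group action on X = {x,y}, every element of {e, a, b, a^{-1}, b^{-1}, ab^{-1}, ba^{-1}} is a restriction g|_v of itself for some nonempty word v (each vertex of the corresponding Moore diagram lies on, or is reachable from, a cycle), and this set is closed under restriction; hence it is contained in the nucleus of the basilica action. -/

import Mathlib

mutual
/-- The generator `a` of the basilica group acting on words over `X = {x,y}` (encoded
as `Bool` with `x = false`, `y = true`): `a·(xw) = y(b·w)`, `a·(yw) = xw`. -/
def basA : List Bool → List Bool
  | [] => []
  | false :: w => true :: basB w
  | true :: w => false :: w
/-- The generator `b`: `b·(xw) = x(a·w)`, `b·(yw) = yw`. -/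
def basB : List Bool → List Bool
  | [] => []
  | false :: w => false :: basA w
  | true :: w => true :: w
end

mutual
/-- The inverse of the generator `a`: `a⁻¹·(yw) = x(b⁻¹·w)`, `a⁻¹·(xw) = yw`. -/
def basAInv : List Bool → List Bool
  | [] => []
  | true :: w => false :: basBInv w
  | false :: w => true :: w
/-- The inverse of the generator `b`: `b⁻¹·(xw) = x(a⁻¹·w)`, `b⁻¹·(yw) = yw`. -/
def basBInv : List Bool → List Bool
  | [] => []
  | false :: w => false :: basAInv w
  | true :: w => true :: w
end

/-- The restriction `f|_x` of a (length- and prefix-preserving) transformation of words: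
`f|_x (w)` is the tail of `f (x :: w)`. -/
def restr (f : List Bool → List Bool) (x : Bool) : List Bool → List Bool :=
  fun w => (f (x :: w)).tail

/-- The restriction `f|_v` of a transformation of words to a word `v`. -/
def restrW : (List Bool → List Bool) → List Bool → (List Bool → List Bool)
  | f, [] => f
  | f, x :: v => restrW (restr f x) v

/-- The candidate nucleus `{e, a, b, a⁻¹, b⁻¹, ab⁻¹, ba⁻¹}` of the basilica action. -/
def basNucSet : Set (List Bool → List Bool) :=
  {id, basA, basB, basAInv, basBInv, basA ∘ basBInv, basB ∘ basAInv}

lemma restr_id (x : Bool) : restr id x = id := by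
  funext w; cases x <;> rfl

lemma restr_basA_false : restr basA false = basB := by funext w; rfl
lemma restr_basA_true : restr basA true = id := by funext w; rfl
lemma restr_basB_false : restr basB false = basA := by funext w; rfl
lemma restr_basB_true : restr basB true = id := by funext w; rfl
lemma restr_basAInv_true : restr basAInv true = basBInv := by funext w; rfl
lemma restr_basAInv_false : restr basAInv false = id := by funext w; rfl
lemma restr_basBInv_false : restr basBInv false = basAInv := by funext w; rfl
lemma restr_basBInv_true : restr basBInv true = id := by funext w; rfl
lemma restr_AB_false : restr (basA ∘ basBInv) false = basB ∘ basAInv := by funext w; rfl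
lemma restr_AB_true : restr (basA ∘ basBInv) true = id := by funext w; rfl
lemma restr_BA_true : restr (basB ∘ basAInv) true = basA ∘ basBInv := by funext w; rfl
lemma restr_BA_false : restr (basB ∘ basAInv) false = id := by funext w; rfl

lemma restrW_append (f : List Bool → List Bool) (u w : List Bool) :
    restrW f (u ++ w) = restrW (restrW f u) w := by
  induction u generalizing f with
  | nil => rfl
  | cons x u ih => simp [restrW, ih]

lemma cycle_to_nucleus {f : List Bool → List Bool} {v : List Bool}
    (hv : v ≠ []) (hf : restrW f v = f) (n : ℕ) :
    ∃ w : List Bool, n ≤ w.length ∧ restrW f w = f := by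
  induction n with
  | zero => exact ⟨[], by simp, rfl⟩
  | succ n ih =>
    obtain ⟨w, hw, hfw⟩ := ih
    refine ⟨w ++ v, ?_, by rw [restrW_append, hfw, hf]⟩
    have : 1 ≤ v.length := List.length_pos_iff.mpr hv
    simp only [List.length_append]; omega

/-- In the basilica action, every element of `{e, a, b, a⁻¹, b⁻¹, ab⁻¹, ba⁻¹}` is a
restriction `g|_v` of itself for some nonempty word `v` (each vertex of the Moore
diagram lies on a cycle), the set is closed under restriction, and hence it is
contained in the nucleus of the basilica action. -/
theorem basilica_nucleus_containment :
    (∀ f ∈ basNucSet, ∃ v : List Bool, v ≠ [] ∧ restrW f v = f) ∧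
    (∀ f ∈ basNucSet, ∀ x : Bool, restr f x ∈ basNucSet) ∧
    basNucSet ⊆
      ⋃ g ∈ Submonoid.closure
        ({basA, basB, basAInv, basBInv} : Set (Function.End (List Bool))),
        ⋂ n : ℕ, {f : List Bool → List Bool |
          ∃ v : List Bool, n ≤ v.length ∧ restrW g v = f} := by
  have hcyc : ∀ f ∈ basNucSet, ∃ v : List Bool, v ≠ [] ∧ restrW f v = f := by
    intro f hf
    simp only [basNucSet, Set.mem_insert_iff, Set.mem_singleton_iff] at hf
    rcases hf with rfl | rfl | rfl | rfl | rfl | rfl | rfl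
    · exact ⟨[false], by simp, by simp [restrW, restr_id]⟩
    · exact ⟨[false, false], by simp,
        by simp [restrW, restr_basA_false, restr_basB_false]⟩
    · exact ⟨[false, false], by simp,
        by simp [restrW, restr_basA_false, restr_basB_false]⟩
    · exact ⟨[true, false], by simp,
        by simp [restrW, restr_basAInv_true, restr_basBInv_false]⟩
    · exact ⟨[false, true], by simp,
        by simp [restrW, restr_basAInv_true, restr_basBInv_false]⟩
    · exact ⟨[false, true], by simp, by simp [restrW, restr_AB_false, restr_BA_true]⟩
    · exact ⟨[true, false], by simp, by simp [restrW, restr_AB_false, restr_BA_true]⟩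
  refine ⟨hcyc, ?_, ?_⟩
  · intro f hf x
    simp only [basNucSet, Set.mem_insert_iff, Set.mem_singleton_iff] at hf ⊢
    rcases hf with rfl | rfl | rfl | rfl | rfl | rfl | rfl <;> cases x <;>
      simp [restr_id, restr_basA_false, restr_basA_true, restr_basB_false,
        restr_basB_true, restr_basAInv_true, restr_basAInv_false,
        restr_basBInv_false, restr_basBInv_true, restr_AB_false, restr_AB_true,
        restr_BA_true, restr_BA_false]
  · intro f hf
    obtain ⟨v, hv, hfv⟩ := hcyc f hf
    have hcl : f ∈ Submonoid.closure
        ({basA, basB, basAInv, basBInv} : Set (Function.End (List Bool))) := by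
      simp only [basNucSet, Set.mem_insert_iff, Set.mem_singleton_iff] at hf
      have ha := Submonoid.subset_closure
        (s := ({basA, basB, basAInv, basBInv} : Set (Function.End (List Bool))))
        (show basA ∈ _ from Or.inl rfl)
      have hb := Submonoid.subset_closure
        (s := ({basA, basB, basAInv, basBInv} : Set (Function.End (List Bool))))
        (show basB ∈ _ from Or.inr (Or.inl rfl))
      have hai := Submonoid.subset_closure
        (s := ({basA, basB, basAInv, basBInv} : Set (Function.End (List Bool))))
        (show basAInv ∈ _ from Or.inr (Or.inr (Or.inl rfl)))
      have hbi := Submonoid.subset_closure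
        (s := ({basA, basB, basAInv, basBInv} : Set (Function.End (List Bool))))
        (show basBInv ∈ _ from Or.inr (Or.inr (Or.inr rfl)))
      rcases hf with rfl | rfl | rfl | rfl | rfl | rfl | rfl
      · exact one_mem _
      · exact ha
      · exact hb
      · exact hai
      · exact hbi
      · exact mul_mem ha hbi
      · exact mul_mem hb hai
    exact Set.mem_iUnion₂.mpr ⟨f, hcl,
      Set.mem_iInter.mpr fun n => cycle_to_nucleus hv hfv n⟩
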